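/- Let φ be a subharmonic function on ℂ with Δφ a doubling measure, and let ρ(z) be the positive radius with Δφ(D(z,ρ(z))) = 1. If the disks D(z) = D(z, ρ(z)) and D(ζ) = D(ζ, ρ(ζ)) intersect, then ρ(z) and ρ(ζ) are comparable: c ρ(ζ) ≤ ρ(z) ≤ C ρ(ζ) with constants c, C > 0 depending only on the doubling constant of Δφ. -/

import Mathlib

open MeasureTheory Metric Complex Filter
open scoped ENNReal

noncomputable section

/-- Pointwise Laplacian of a function on `ℂ ≃ ℝ²`. -/
def lap (f : ℂ → ℝ) (z : ℂ) : ℝ :=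
  iteratedFDeriv ℝ 2 f z ![1, 1] + iteratedFDeriv ℝ 2 f z ![Complex.I, Complex.I]

/-- `φ` is subharmonic on `ℂ`: upper semicontinuous, locally integrable, and satisfies
the sub-mean value inequality on disks. -/
def Subharmonic (φ : ℂ → ℝ) : Prop :=
  UpperSemicontinuous φ ∧ LocallyIntegrable φ volume ∧
    ∀ z : ℂ, ∀ r : ℝ, 0 < r → φ z ≤ ⨍ w in ball z r, φ w ∂volume

/-- `μ` is the distributional Laplacian of `φ`. -/
def IsLaplacianOf (μ : Measure ℂ) (φ : ℂ → ℝ) : Prop :=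
  ∀ ψ : ℂ → ℝ, ContDiff ℝ (⊤ : ℕ∞) ψ → HasCompactSupport ψ →
    ∫ z : ℂ, lap ψ z * φ z = ∫ z : ℂ, ψ z ∂μ

/-- `μ` is doubling with doubling constant (at most) `Cd`. -/
def DoublingWith (μ : Measure ℂ) (Cd : ℝ) : Prop :=
  ∀ z : ℂ, ∀ r : ℝ, 0 < r → μ (ball z (2 * r)) ≤ ENNReal.ofReal Cd * μ (ball z r)

/-- `ρ z` is the positive radius such that `μ (D(z, ρ z)) = 1`. -/
def IsRadiusFn (μ : Measure ℂ) (ρ : ℂ → ℝ) : Prop :=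
  ∀ z : ℂ, 0 < ρ z ∧ μ (ball z (ρ z)) = 1

lemma key_bound (Cd : ℝ) (hCd : 1 ≤ Cd) (k : ℕ) (hk : Cd < (1 + Cd⁻¹ ^ 3) ^ k)
    (μ : Measure ℂ) (hD : DoublingWith μ Cd) (ρ : ℂ → ℝ) (hρ : IsRadiusFn μ ρ)
    (z ζ : ℂ) (h : (ball z (ρ z) ∩ ball ζ (ρ ζ)).Nonempty) :
    ρ z ≤ 2 ^ (k + 1) * ρ ζ := by
  set a : ℝ≥0∞ := ENNReal.ofReal Cd with ha
  have hCd0 : (0:ℝ) < Cd := by linarith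
  have ha1 : (1:ℝ≥0∞) ≤ a := by simpa [ha] using ENNReal.one_le_ofReal.mpr hCd
  have ha0 : a ≠ 0 := by positivity
  have haT : a ≠ ⊤ := ENNReal.ofReal_ne_top
  -- reverse doubling
  have rev : ∀ x : ℂ, ∀ r : ℝ, 0 < r →
      (1 + a⁻¹ ^ 3) * μ (ball x r) ≤ μ (ball x (2 * r)) := by
    intro x r hr
    set y : ℂ := x + ((3 * r / 2 : ℝ) : ℂ) with hy
    have hxy : dist x y = 3 * r / 2 := by
      have : x - y = ((-(3 * r / 2) : ℝ) : ℂ) := by push_cast [hy]; ring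
      rw [Complex.dist_eq, this, Complex.norm_real, Real.norm_eq_abs, abs_neg, abs_of_pos (by linarith)]
    have hdisj : Disjoint (ball x r) (ball y (r / 2)) := by
      rw [Set.disjoint_left]
      intro w hw hw'
      have h1 : dist w x < r := mem_ball.mp hw
      have h2 : dist w y < r / 2 := mem_ball.mp hw'
      have : dist x y ≤ dist x w + dist w y := dist_triangle _ _ _
      rw [dist_comm x w] at this
      linarith [hxy ▸ this]
    have hsub1 : ball y (r / 2) ⊆ ball x (2 * r) := by
      apply ball_subset_ball'
      rw [dist_comm, hxy]; linarith
    have hsub2 : ball x r ⊆ ball y (4 * r) := by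
      apply ball_subset_ball'
      rw [hxy]; linarith
    have h3 : μ (ball y (4 * r)) ≤ a ^ 3 * μ (ball y (r / 2)) := by
      calc μ (ball y (4 * r)) = μ (ball y (2 * (2 * r))) := by ring_nf
        _ ≤ a * μ (ball y (2 * r)) := hD y (2 * r) (by positivity)
        _ = a * μ (ball y (2 * (r))) := by norm_num
        _ ≤ a * (a * μ (ball y r)) := mul_le_mul_right (hD y r hr) _
        _ = a * (a * μ (ball y (2 * (r / 2)))) := by rw [show (2:ℝ) * (r / 2) = r by ring]
        _ ≤ a * (a * (a * μ (ball y (r / 2)))) :=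
            mul_le_mul_right (mul_le_mul_right (hD y (r / 2) (by positivity)) _) _
        _ = a ^ 3 * μ (ball y (r / 2)) := by ring
    have h4 : a⁻¹ ^ 3 * μ (ball x r) ≤ μ (ball y (r / 2)) := by
      calc a⁻¹ ^ 3 * μ (ball x r) ≤ a⁻¹ ^ 3 * (a ^ 3 * μ (ball y (r / 2))) :=
            mul_le_mul_right ((measure_mono hsub2).trans h3) _
        _ = (a⁻¹ * a) ^ 3 * μ (ball y (r / 2)) := by ring
        _ = μ (ball y (r / 2)) := by rw [ENNReal.inv_mul_cancel ha0 haT, one_pow, one_mul]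
    calc (1 + a⁻¹ ^ 3) * μ (ball x r) = μ (ball x r) + a⁻¹ ^ 3 * μ (ball x r) := by ring
      _ ≤ μ (ball x r) + μ (ball y (r / 2)) := add_le_add_right h4 _
      _ = μ (ball x r ∪ ball y (r / 2)) := (measure_union hdisj measurableSet_ball).symm
      _ ≤ μ (ball x (2 * r)) := measure_mono (Set.union_subset (ball_subset_ball (by linarith)) hsub1)
  -- iterated reverse doubling
  have iter : ∀ x : ℂ, ∀ r : ℝ, 0 < r → ∀ n : ℕ,
      (1 + a⁻¹ ^ 3) ^ n * μ (ball x r) ≤ μ (ball x (2 ^ n * r)) := by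
    intro x r hr n
    induction n with
    | zero => simp
    | succ n ih =>
      calc (1 + a⁻¹ ^ 3) ^ (n + 1) * μ (ball x r)
          = (1 + a⁻¹ ^ 3) * ((1 + a⁻¹ ^ 3) ^ n * μ (ball x r)) := by ring
        _ ≤ (1 + a⁻¹ ^ 3) * μ (ball x (2 ^ n * r)) := mul_le_mul_right ih _
        _ ≤ μ (ball x (2 * (2 ^ n * r))) := rev x _ (by positivity)
        _ = μ (ball x (2 ^ (n + 1) * r)) := by ring_nf
  by_contra hcon
  push_neg at hcon
  obtain ⟨hz1, hz2⟩ := hρ z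
  obtain ⟨hζ1, hζ2⟩ := hρ ζ
  obtain ⟨w, hw1, hw2⟩ := h
  have hdzζ : dist ζ z < ρ z + ρ ζ := by
    have h1 : dist w z < ρ z := mem_ball.mp hw1
    have h2 : dist w ζ < ρ ζ := mem_ball.mp hw2
    have := dist_triangle ζ w z
    rw [dist_comm ζ w] at this
    linarith
  have hpk : (1:ℝ) ≤ 2 ^ k := one_le_pow₀ (by norm_num)
  have hsub : ball ζ (2 ^ k * ρ ζ) ⊆ ball z (2 * ρ z) := by
    apply ball_subset_ball'
    have : (2:ℝ) ^ (k + 1) = 2 * 2 ^ k := by ring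
    nlinarith [hζ1.le, hcon]
  have hchain : (1 + a⁻¹ ^ 3) ^ k ≤ a := by
    calc (1 + a⁻¹ ^ 3) ^ k = (1 + a⁻¹ ^ 3) ^ k * μ (ball ζ (ρ ζ)) := by rw [hζ2, mul_one]
      _ ≤ μ (ball ζ (2 ^ k * ρ ζ)) := iter ζ _ hζ1 k
      _ ≤ μ (ball z (2 * ρ z)) := measure_mono hsub
      _ ≤ a * μ (ball z (ρ z)) := hD z _ hz1
      _ = a := by rw [hz2, mul_one]
  have hlt : a < (1 + a⁻¹ ^ 3) ^ k := by
    have hinv : a⁻¹ = ENNReal.ofReal Cd⁻¹ := (ENNReal.ofReal_inv_of_pos hCd0).symm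
    rw [hinv, ← ENNReal.ofReal_pow (by positivity), ← ENNReal.ofReal_one,
      ← ENNReal.ofReal_add (by norm_num) (by positivity),
      ← ENNReal.ofReal_pow (by positivity), ha]
    exact (ENNReal.ofReal_lt_ofReal_iff (by positivity)).mpr hk
  exact absurd (hlt.trans_le hchain) (lt_irrefl a)

/-- if the disks `D(z, ρ(z))` and `D(ζ, ρ(ζ))` intersect then
`ρ(z) ∼ ρ(ζ)`, with constants depending only on the doubling constant of `Δφ`. -/
theorem rho_comparable_of_disks_intersect :
    ∀ Cd : ℝ, ∃ c C : ℝ, 0 < c ∧ 0 < C ∧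
      ∀ (φ : ℂ → ℝ) (μ : Measure ℂ) (ρ : ℂ → ℝ),
        Subharmonic φ → IsLaplacianOf μ φ → DoublingWith μ Cd → IsRadiusFn μ ρ →
        ∀ z ζ : ℂ, (ball z (ρ z) ∩ ball ζ (ρ ζ)).Nonempty →
          c * ρ ζ ≤ ρ z ∧ ρ z ≤ C * ρ ζ := by
  intro Cd
  set K := max Cd 1 with hKdef
  have hK1 : (1:ℝ) ≤ K := le_max_right _ _
  have hKpos : (0:ℝ) < K := by linarith
  obtain ⟨k, hk⟩ := pow_unbounded_of_one_lt K (show (1:ℝ) < 1 + K⁻¹ ^ 3 by nlinarith [pow_pos (inv_pos.mpr hKpos) 3])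
  refine ⟨(2 ^ (k + 1) : ℝ)⁻¹, 2 ^ (k + 1), by positivity, by positivity, ?_⟩
  intro φ μ ρ _ _ hD hρ z ζ h
  have hD' : DoublingWith μ K := fun x r hr =>
    (hD x r hr).trans (mul_le_mul_left (ENNReal.ofReal_le_ofReal (le_max_left _ _)) _)
  have h2 := key_bound K hK1 k hk μ hD' ρ hρ z ζ h
  have h3 := key_bound K hK1 k hk μ hD' ρ hρ ζ z (by rwa [Set.inter_comm] at h)
  refine ⟨?_, h2⟩
  have hp : (0:ℝ) < 2 ^ (k + 1) := by positivity
  calc (2 ^ (k + 1) : ℝ)⁻¹ * ρ ζ ≤ (2 ^ (k + 1) : ℝ)⁻¹ * (2 ^ (k + 1) * ρ z) := mul_le_mul_of_nonneg_left h3 (by positivity)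
    _ = ρ z := by field_simp
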